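/- arXiv:2602.20313 — 2 statements merged into one kernel-verified Lean document; each statement's English description precedes it below -/
import Mathlib

section
/- Let Φ(u) = ∑_{n=1}^∞ (2π²n⁴e^{9u} − 3πn²e^{5u})·e^{-πn²e^{4u}} and let Φ_N(u) denote its partial sum up to n = N. Then for all u ∈ [0, 0.21], |Φ(u) − Φ₅₀(u)| < 10^{-70}. -/
set_option maxHeartbeats 1000000

open Real

/-- The `n`-th term (for `n ≥ 1`) of the series defining the de Bruijn–Newman kernel `Φ`. -/
noncomputable def phiTerm (n : ℕ) (u : ℝ) : ℝ :=
  (2 * π ^ 2 * (n : ℝ) ^ 4 * Real.exp (9 * u) - 3 * π * (n : ℝ) ^ 2 * Real.exp (5 * u)) *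
    Real.exp (-(π * (n : ℝ) ^ 2 * Real.exp (4 * u)))

/-- The de Bruijn–Newman kernel `Φ(u) = ∑_{n=1}^∞ (2π²n⁴e^{9u} − 3πn²e^{5u})e^{−πn²e^{4u}}`. -/
noncomputable def Phi (u : ℝ) : ℝ := ∑' n : ℕ, phiTerm (n + 1) u

/-- The partial sum `Φ_N(u) = ∑_{n=1}^N (2π²n⁴e^{9u} − 3πn²e^{5u})e^{−πn²e^{4u}}`. -/
noncomputable def PhiPartial (N : ℕ) (u : ℝ) : ℝ := ∑ n ∈ Finset.range N, phiTerm (n + 1) u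

lemma exp_one_gt : (2.7 : ℝ) < Real.exp 1 := by
  have := Real.exp_one_gt_d9; linarith

lemma pow27_le_exp (m : ℕ) : (2.7 : ℝ) ^ m ≤ Real.exp m := by
  calc (2.7 : ℝ) ^ m ≤ (Real.exp 1) ^ m :=
        pow_le_pow_left₀ (by norm_num) exp_one_gt.le m
    _ = Real.exp m := by rw [← Real.exp_nat_mul, mul_one]

lemma phiTerm_tail_bound {n : ℕ} (hn : 51 ≤ n) {u : ℝ} (hu0 : 0 ≤ u) (hu1 : u ≤ 0.21) :
    |phiTerm n u| ≤ Real.exp (-(n : ℝ) - 200) := by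
  have hpi3 : (3 : ℝ) < π := Real.pi_gt_three
  have hpi4 : π < 4 := by have := Real.pi_lt_d2; linarith
  have hN1 : (1 : ℝ) ≤ (n : ℝ) := by exact_mod_cast Nat.one_le_iff_ne_zero.mpr (by omega)
  have hN : (51 : ℝ) ≤ (n : ℝ) := by exact_mod_cast hn
  have hN24 : (n : ℝ) ^ 2 ≤ (n : ℝ) ^ 4 := pow_le_pow_right₀ hN1 (by norm_num)
  have hN4pos : (0 : ℝ) < (n : ℝ) ^ 4 := by positivity
  have he4 : (1 : ℝ) ≤ Real.exp (4 * u) := by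
    rw [Real.one_le_exp_iff]; positivity
  have hCbound : Real.exp (-(π * (n : ℝ) ^ 2 * Real.exp (4 * u))) ≤ Real.exp (-(3 * (n : ℝ) ^ 2)) := by
    apply Real.exp_le_exp.mpr
    have h2 : π * (n : ℝ) ^ 2 ≤ π * (n : ℝ) ^ 2 * Real.exp (4 * u) :=
      le_mul_of_one_le_right (by positivity) he4
    nlinarith
  have hexp2 : Real.exp 2 ≤ 8 := by
    have h := Real.exp_one_lt_d9
    calc Real.exp 2 = Real.exp 1 * Real.exp 1 := by rw [← Real.exp_add]; norm_num
      _ ≤ 2.7182818286 * 2.7182818286 := by nlinarith [Real.exp_pos 1]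
      _ ≤ 8 := by norm_num
  have he2 : Real.exp (9 * u) ≤ 8 := (Real.exp_le_exp.mpr (by linarith)).trans hexp2
  have he2' : Real.exp (5 * u) ≤ 8 := (Real.exp_le_exp.mpr (by linarith)).trans hexp2
  have hA' : 2 * π ^ 2 * (n : ℝ) ^ 4 * Real.exp (9 * u) ≤ 256 * (n : ℝ) ^ 4 := by
    calc 2 * π ^ 2 * (n : ℝ) ^ 4 * Real.exp (9 * u) ≤ 2 * 4 ^ 2 * (n : ℝ) ^ 4 * 8 := by
          gcongr
      _ = 256 * (n : ℝ) ^ 4 := by ring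
  have hB' : 3 * π * (n : ℝ) ^ 2 * Real.exp (5 * u) ≤ 96 * (n : ℝ) ^ 4 := by
    calc 3 * π * (n : ℝ) ^ 2 * Real.exp (5 * u) ≤ 3 * 4 * (n : ℝ) ^ 4 * 8 := by
          gcongr
      _ = 96 * (n : ℝ) ^ 4 := by ring
  have hA : (0:ℝ) ≤ 2 * π ^ 2 * (n : ℝ) ^ 4 * Real.exp (9 * u) := by positivity
  have hB : (0:ℝ) ≤ 3 * π * (n : ℝ) ^ 2 * Real.exp (5 * u) := by positivity
  have habs : |2 * π ^ 2 * (n : ℝ) ^ 4 * Real.exp (9 * u) - 3 * π * (n : ℝ) ^ 2 * Real.exp (5 * u)|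
      ≤ 640 * (n : ℝ) ^ 4 := by
    rw [abs_sub_le_iff]; constructor <;> nlinarith
  have key : |phiTerm n u| ≤ 640 * (n : ℝ) ^ 4 * Real.exp (-(3 * (n : ℝ) ^ 2)) := by
    rw [phiTerm, abs_mul, Real.abs_exp]
    exact mul_le_mul habs hCbound (Real.exp_pos _).le (by positivity)
  have hN4 : (n : ℝ) ^ 4 ≤ Real.exp (4 * (n : ℝ)) := by
    have h1 : (n : ℝ) ≤ (2 : ℝ) ^ n := by exact_mod_cast (Nat.lt_two_pow_self (n := n)).le
    have h2 : (2 : ℝ) ^ n ≤ Real.exp n := by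
      calc (2 : ℝ) ^ n ≤ (2.7 : ℝ) ^ n := pow_le_pow_left₀ (by norm_num) (by norm_num) n
        _ ≤ Real.exp n := pow27_le_exp n
    have h3 : (n : ℝ) ≤ Real.exp n := h1.trans h2
    calc (n : ℝ) ^ 4 ≤ (Real.exp n) ^ 4 := pow_le_pow_left₀ (by positivity) h3 4
      _ = Real.exp (4 * (n : ℝ)) := by
          rw [← Real.exp_nat_mul]; norm_num [mul_comm]
  have h640 : (640 : ℝ) ≤ Real.exp 7 := by
    calc (640 : ℝ) ≤ (2.7 : ℝ) ^ 7 := by norm_num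
      _ ≤ Real.exp 7 := by exact_mod_cast pow27_le_exp 7
  calc |phiTerm n u| ≤ 640 * (n : ℝ) ^ 4 * Real.exp (-(3 * (n : ℝ) ^ 2)) := key
    _ ≤ Real.exp 7 * Real.exp (4 * (n : ℝ)) * Real.exp (-(3 * (n : ℝ) ^ 2)) := by
        apply mul_le_mul_of_nonneg_right _ (Real.exp_pos _).le
        exact mul_le_mul h640 hN4 (by positivity) (Real.exp_pos _).le
    _ = Real.exp (7 + 4 * (n : ℝ) + -(3 * (n : ℝ) ^ 2)) := by rw [← Real.exp_add, ← Real.exp_add]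
    _ ≤ Real.exp (-(n : ℝ) - 200) := by
        apply Real.exp_le_exp.mpr; nlinarith

lemma exp251_gt : (2e70 : ℝ) < Real.exp 251 := by
  have h : (2.7 : ℝ) ^ 251 ≤ Real.exp 251 := by exact_mod_cast pow27_le_exp 251
  have h2 : (2e70 : ℝ) < (2.7 : ℝ) ^ 251 := by norm_num
  linarith

theorem truncation_bound (u : ℝ) (hu : u ∈ Set.Icc (0:ℝ) 0.21) :
    |Phi u - PhiPartial 50 u| < 1e-70 := by
  obtain ⟨hu0, hu1⟩ := hu
  have hb : ∀ k : ℕ, |phiTerm (k + 50 + 1) u| ≤ Real.exp (-(k : ℝ) - 251) := by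
    intro k
    have h := phiTerm_tail_bound (n := k + 51) (by omega) hu0 hu1
    have he : Real.exp (-((k + 51 : ℕ) : ℝ) - 200) = Real.exp (-(k : ℝ) - 251) := by
      push_cast; ring_nf
    rw [he] at h
    simpa [show k + 50 + 1 = k + 51 by omega] using h
  have hgeq : ∀ k : ℕ, Real.exp (-(k : ℝ) - 251) = Real.exp (-251) * (Real.exp (-1)) ^ k := by
    intro k
    rw [← Real.exp_nat_mul, ← Real.exp_add]; ring_nf
  have hlt1 : Real.exp (-1 : ℝ) < 1 := Real.exp_lt_one_iff.mpr (by norm_num)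
  have hg : Summable (fun k : ℕ => Real.exp (-(k : ℝ) - 251)) := by
    simp_rw [hgeq]
    exact (summable_geometric_of_lt_one (Real.exp_pos _).le hlt1).mul_left _
  have htail : Summable (fun k : ℕ => phiTerm (k + 50 + 1) u) :=
    Summable.of_abs (Summable.of_nonneg_of_le (fun _ => abs_nonneg _) hb hg)
  have hsum : Summable (fun n : ℕ => phiTerm (n + 1) u) :=
    (summable_nat_add_iff 50).mp htail
  have heq : Phi u - PhiPartial 50 u = ∑' k : ℕ, phiTerm (k + 50 + 1) u := by
    have h := Summable.sum_add_tsum_nat_add 50 hsum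
    rw [Phi, PhiPartial]
    linarith [h]
  have habs : |∑' k : ℕ, phiTerm (k + 50 + 1) u| ≤ ∑' k : ℕ, Real.exp (-(k : ℝ) - 251) := by
    have h1 : |∑' k : ℕ, phiTerm (k + 50 + 1) u| ≤ ∑' k : ℕ, |phiTerm (k + 50 + 1) u| := by
      have h2 := norm_tsum_le_tsum_norm (f := fun k : ℕ => phiTerm (k + 50 + 1) u)
        (by simpa [Real.norm_eq_abs] using htail.abs)
      simpa [Real.norm_eq_abs] using h2
    exact h1.trans (Summable.tsum_le_tsum hb htail.abs hg)
  have hgeo : (∑' k : ℕ, Real.exp (-(k : ℝ) - 251))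
      = Real.exp (-251) * (1 - Real.exp (-1))⁻¹ := by
    simp_rw [hgeq]
    rw [tsum_mul_left, tsum_geometric_of_lt_one (Real.exp_pos _).le hlt1]
  have hhalf : Real.exp (-1 : ℝ) ≤ 1 / 2 := by
    rw [Real.exp_neg]
    have h2 : (2 : ℝ) ≤ Real.exp 1 := by linarith [exp_one_gt]
    rw [inv_le_comm₀ (Real.exp_pos 1) (by norm_num)]
    linarith
  have hfin : Real.exp (-251) * (1 - Real.exp (-1))⁻¹ < 1e-70 := by
    have hpos : (0:ℝ) < 1 - Real.exp (-1) := by linarith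
    have hinv : (1 - Real.exp (-1))⁻¹ ≤ 2 := by
      rw [inv_le_comm₀ hpos (by norm_num)]; linarith
    have hsmall : Real.exp (-251 : ℝ) < 5e-71 := by
      rw [Real.exp_neg]
      rw [inv_lt_comm₀ (Real.exp_pos _) (by norm_num)]
      calc (5e-71 : ℝ)⁻¹ = 2e70 := by norm_num
        _ < Real.exp 251 := exp251_gt
    calc Real.exp (-251) * (1 - Real.exp (-1))⁻¹ ≤ Real.exp (-251) * 2 :=
          mul_le_mul_of_nonneg_left hinv (Real.exp_pos _).le
      _ < 5e-71 * 2 := by linarith [Real.exp_pos (-251:ℝ)]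
      _ ≤ 1e-70 := by norm_num
  rw [heq]
  calc |∑' k : ℕ, phiTerm (k + 50 + 1) u| ≤ ∑' k : ℕ, Real.exp (-(k : ℝ) - 251) := habs
    _ = Real.exp (-251) * (1 - Real.exp (-1))⁻¹ := hgeo
    _ < 1e-70 := hfin
end

section
/- Let K be real-analytic on an open interval containing all points u₀ + (i−j)h₀ (for 0 ≤ i, j ≤ r−1 and h near h₀ = 0). Then the function D_r(h) = det[K(u₀ + (i−j)h)]_{i,j=0}^{r−1} vanishes to order at least r(r−1) at h = 0. -/
open Polynomial Finset Matrix

lemma aux_sum_range_card_le : ∀ (k : ℕ) (S : Finset ℕ), S.card = k →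
    ∑ i ∈ Finset.range k, i ≤ ∑ x ∈ S, x := by
  intro k
  induction k with
  | zero => intro S _; simp
  | succ k ih =>
    intro S hc
    have hne : S.Nonempty := by rw [← Finset.card_pos, hc]; omega
    set m := S.max' hne with hm
    have hmem : m ∈ S := S.max'_mem hne
    have hcard : (S.erase m).card = k := by rw [Finset.card_erase_of_mem hmem, hc]; omega
    have hkm : k ≤ m := by
      have hsub : S ⊆ Finset.range (m + 1) := by
        intro x hx
        simp only [Finset.mem_range]
        exact Nat.lt_succ_of_le (S.le_max' x hx)
      have := Finset.card_le_card hsub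
      rw [hc, Finset.card_range] at this
      omega
    have h2 := ih (S.erase m) hcard
    rw [Finset.sum_range_succ]
    have hS : m + ∑ x ∈ S.erase m, x = ∑ x ∈ S, x := Finset.add_sum_erase S id hmem
    omega

lemma aux_sum_range_le_of_injective {r : ℕ} {α : Fin r → ℕ} (hα : Function.Injective α) :
    ∑ i ∈ Finset.range r, i ≤ ∑ i : Fin r, α i := by
  have himg : ∑ x ∈ Finset.univ.image α, x = ∑ i : Fin r, α i :=
    Finset.sum_image (fun a _ b _ h => hα h)
  have hcard : (Finset.univ.image α).card = r := by
    rw [Finset.card_image_of_injective _ hα, Finset.card_univ, Fintype.card_fin]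
  calc ∑ i ∈ Finset.range r, i ≤ ∑ x ∈ Finset.univ.image α, x :=
        aux_sum_range_card_le r _ hcard
    _ = ∑ i : Fin r, α i := himg

/-- Second-level expansion: rows of the form `∑ m, ρ i m * v j ^ m * X ^ m`. -/
lemma aux_alg2 (r n : ℕ) (ρ : Fin r → ℕ → ℝ) (v : Fin r → ℝ) :
    (X : ℝ[X]) ^ (∑ i ∈ Finset.range r, i) ∣
      (Matrix.of fun i j : Fin r => ∑ m ∈ Finset.range n, C (ρ i m * v j ^ m) * X ^ m).det := by
  classical
  set M : Matrix (Fin r) (Fin r) ℝ[X] :=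
    Matrix.of fun i j : Fin r => ∑ m ∈ Finset.range n, C (ρ i m * v j ^ m) * X ^ m with hM
  rw [← Matrix.det_transpose]
  set f := (Matrix.detRowAlternating : (Fin r → ℝ[X]) [⋀^Fin r]→ₗ[ℝ[X]] ℝ[X]) with hf
  set rows : Fin r → (Fin r → ℝ[X]) := fun j => ∑ m ∈ Finset.range n,
      ((C (v j ^ m) * X ^ m) • (fun i => C (ρ i m)) : Fin r → ℝ[X]) with hrowsdef
  have hrows : Mᵀ = Matrix.of rows := by
    funext j i
    simp only [Matrix.transpose_apply, hM, Matrix.of_apply, hrowsdef, Finset.sum_apply,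
      Pi.smul_apply, smul_eq_mul, Polynomial.C_mul]
    exact Finset.sum_congr rfl fun m _ => by ring
  have hdet : Mᵀ.det = f rows := by rw [hrows]; rfl
  rw [hdet]
  have hexp : f rows = ∑ β ∈ Fintype.piFinset (fun _ : Fin r => Finset.range n),
      f fun j => ((C (v j ^ (β j)) * X ^ (β j)) • (fun i => C (ρ i (β j))) : Fin r → ℝ[X]) := by
    exact f.toMultilinearMap.map_sum_finset
      (fun j m => ((C (v j ^ m) * X ^ m) • (fun i => C (ρ i m)) : Fin r → ℝ[X]))
      (fun _ => Finset.range n)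
  rw [hexp]
  apply Finset.dvd_sum
  intro β _
  have hsmul : (f fun j => ((C (v j ^ (β j)) * X ^ (β j)) • (fun i => C (ρ i (β j)))
      : Fin r → ℝ[X])) = (∏ j, (C (v j ^ (β j)) * X ^ (β j))) •
        f fun j => (fun i => C (ρ i (β j)) : Fin r → ℝ[X]) := by
    exact f.toMultilinearMap.map_smul_univ (fun j => C (v j ^ (β j)) * X ^ (β j))
      (fun j => (fun i => C (ρ i (β j)) : Fin r → ℝ[X]))
  rw [hsmul]
  by_cases hinj : Function.Injective β
  · rw [smul_eq_mul]
    apply Dvd.dvd.mul_right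
    have : ∏ j, (C (v j ^ (β j)) * X ^ (β j)) = (∏ j, C (v j ^ (β j))) * X ^ (∑ j, β j) := by
      rw [Finset.prod_mul_distrib, Finset.prod_pow_eq_pow_sum]
    rw [this]
    exact Dvd.dvd.mul_left (pow_dvd_pow _ (aux_sum_range_le_of_injective hinj)) _
  · rw [Function.not_injective_iff] at hinj
    obtain ⟨a, b, hab, hne⟩ := hinj
    have hz : (f fun j => (fun i => C (ρ i (β j)) : Fin r → ℝ[X])) = 0 :=
      f.map_eq_zero_of_eq (fun j => (fun i => C (ρ i (β j)) : Fin r → ℝ[X])) (by simp only [hab]) hne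
    rw [hz, smul_zero]
    exact dvd_zero _

lemma aux_entry_split (n : ℕ) (c : ℕ → ℝ) (x y : ℝ) :
    ∑ k ∈ Finset.range n, C (c k * (x + y) ^ k) * X ^ k
      = ∑ a ∈ Finset.range n, (C (x ^ a) * X ^ a) *
          (∑ k ∈ Finset.Ico a n, C (c k * (k.choose a) * y ^ (k - a)) * X ^ (k - a)) := by
  have hR : ∑ a ∈ Finset.range n, (C (x ^ a) * X ^ a) *
        (∑ k ∈ Finset.Ico a n, C (c k * (k.choose a) * y ^ (k - a)) * X ^ (k - a))
      = ∑ a ∈ Finset.Ico 0 n, ∑ k ∈ Finset.Ico a n,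
          C (c k * (k.choose a) * y ^ (k - a) * x ^ a) * X ^ k := by
    rw [Finset.range_eq_Ico]
    refine Finset.sum_congr rfl fun a _ => ?_
    rw [Finset.mul_sum]
    refine Finset.sum_congr rfl fun k hk => ?_
    have hak : a ≤ k := (Finset.mem_Ico.mp hk).1
    calc (C (x ^ a) * X ^ a) * (C (c k * (k.choose a) * y ^ (k - a)) * X ^ (k - a))
        = C (c k * (k.choose a) * y ^ (k - a) * x ^ a) * (X ^ a * X ^ (k - a)) := by
          simp only [Polynomial.C_mul]; ring
      _ = C (c k * (k.choose a) * y ^ (k - a) * x ^ a) * X ^ k := by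
          rw [← pow_add, Nat.add_sub_cancel' hak]
  rw [hR, Finset.sum_Ico_Ico_comm, ← Finset.range_eq_Ico]
  refine Finset.sum_congr rfl fun k _ => ?_
  rw [add_pow, Finset.mul_sum, map_sum, Finset.sum_mul]
  rw [Finset.range_eq_Ico]
  refine Finset.sum_congr rfl fun a _ => ?_
  congr 1
  congr 1
  ring

lemma aux_alg (r n : ℕ) (c : ℕ → ℝ) (u v : Fin r → ℝ) :
    (X : ℝ[X]) ^ (2 * ∑ i ∈ Finset.range r, i) ∣
      (Matrix.of fun i j : Fin r =>
        ∑ k ∈ Finset.range n, C (c k * (u i + v j) ^ k) * X ^ k).det := by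
  classical
  set σsum := ∑ i ∈ Finset.range r, i with hσ
  set w : ℕ → Fin r → ℝ[X] := fun a j =>
    ∑ k ∈ Finset.Ico a n, C (c k * (k.choose a) * v j ^ (k - a)) * X ^ (k - a) with hw
  set f := (Matrix.detRowAlternating : (Fin r → ℝ[X]) [⋀^Fin r]→ₗ[ℝ[X]] ℝ[X]) with hf
  set rows : Fin r → (Fin r → ℝ[X]) := fun i => ∑ a ∈ Finset.range n,
      ((C (u i ^ a) * X ^ a) • w a) with hrowsdef
  have hrows : (Matrix.of fun i j : Fin r =>
      ∑ k ∈ Finset.range n, C (c k * (u i + v j) ^ k) * X ^ k) = Matrix.of rows := by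
    funext i j
    simp only [Matrix.of_apply, hrowsdef, Finset.sum_apply, Pi.smul_apply, smul_eq_mul]
    exact aux_entry_split n c (u i) (v j)
  have hdet : (Matrix.of fun i j : Fin r =>
      ∑ k ∈ Finset.range n, C (c k * (u i + v j) ^ k) * X ^ k).det = f rows := by
    rw [hrows]; rfl
  rw [hdet]
  have hexp : f rows = ∑ α ∈ Fintype.piFinset (fun _ : Fin r => Finset.range n),
      f fun i => ((C (u i ^ (α i)) * X ^ (α i)) • w (α i)) :=
    f.toMultilinearMap.map_sum_finset (fun i a => (C (u i ^ a) * X ^ a) • w a)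
      (fun _ => Finset.range n)
  rw [hexp]
  apply Finset.dvd_sum
  intro α _
  have hsmul : (f fun i => ((C (u i ^ (α i)) * X ^ (α i)) • w (α i)))
      = (∏ i, (C (u i ^ (α i)) * X ^ (α i))) • f fun i => w (α i) :=
    f.toMultilinearMap.map_smul_univ (fun i => C (u i ^ (α i)) * X ^ (α i)) (fun i => w (α i))
  rw [hsmul]
  by_cases hinj : Function.Injective α
  · rw [smul_eq_mul, two_mul, pow_add]
    apply mul_dvd_mul
    · have : ∏ i, (C (u i ^ (α i)) * X ^ (α i)) = (∏ i, C (u i ^ (α i))) * X ^ (∑ i, α i) := by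
        rw [Finset.prod_mul_distrib, Finset.prod_pow_eq_pow_sum]
      rw [this]
      exact Dvd.dvd.mul_left (pow_dvd_pow _ (aux_sum_range_le_of_injective hinj)) _
    · -- rewrite the remaining det in the `aux_alg2` form
      set ρ : Fin r → ℕ → ℝ := fun i m =>
        if m + α i < n then c (m + α i) * ((m + α i).choose (α i)) else 0 with hρ
      have hwrite : (fun i => w (α i)) = fun i j =>
          ∑ m ∈ Finset.range n, C (ρ i m * v j ^ m) * X ^ m := by
        funext i j
        have h1 : w (α i) j = ∑ l ∈ Finset.range (n - α i),
            C (c (l + α i) * ((l + α i).choose (α i)) * v j ^ l) * X ^ l := by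
          rw [hw]
          simp only
          rw [Finset.sum_Ico_eq_sum_range]
          refine Finset.sum_congr rfl fun l _ => ?_
          rw [Nat.add_sub_cancel_left, Nat.add_comm (α i) l]
        have h2 : ∑ m ∈ Finset.range n, C (ρ i m * v j ^ m) * X ^ m
            = ∑ m ∈ Finset.range (n - α i),
                C (c (m + α i) * ((m + α i).choose (α i)) * v j ^ m) * X ^ m := by
          have hsplit : ∀ m : ℕ, C (ρ i m * v j ^ m) * X ^ m
              = if m + α i < n
                then C (c (m + α i) * ((m + α i).choose (α i)) * v j ^ m) * X ^ m else 0 := by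
            intro m
            rw [hρ]
            simp only
            split <;> simp
          calc ∑ m ∈ Finset.range n, C (ρ i m * v j ^ m) * X ^ m
              = ∑ m ∈ Finset.range n, (if m + α i < n
                  then C (c (m + α i) * ((m + α i).choose (α i)) * v j ^ m) * X ^ m else 0) :=
                Finset.sum_congr rfl fun m _ => hsplit m
            _ = ∑ m ∈ (Finset.range n).filter (fun m => m + α i < n),
                  C (c (m + α i) * ((m + α i).choose (α i)) * v j ^ m) * X ^ m :=
                (Finset.sum_filter _ _).symm
            _ = ∑ m ∈ Finset.range (n - α i),
                  C (c (m + α i) * ((m + α i).choose (α i)) * v j ^ m) * X ^ m := by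
                congr 1
                ext m
                simp only [Finset.mem_filter, Finset.mem_range]
                omega
        rw [h1, h2]
      rw [hwrite]
      have := aux_alg2 r n ρ v
      have heq : (Matrix.of fun i j : Fin r =>
          ∑ m ∈ Finset.range n, C (ρ i m * v j ^ m) * X ^ m).det
          = f (fun i j => ∑ m ∈ Finset.range n, C (ρ i m * v j ^ m) * X ^ m) := rfl
      rw [heq] at this
      exact this
  · rw [Function.not_injective_iff] at hinj
    obtain ⟨a, b, hab, hne⟩ := hinj
    have hz : (f fun i => w (α i)) = 0 :=
      f.map_eq_zero_of_eq (fun i => w (α i)) (by simp only [hab]) hne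
    rw [hz, smul_zero]
    exact dvd_zero _

lemma aux_iD_congr {f g : ℝ → ℝ} {x : ℝ} (h : f =ᶠ[nhds x] g) (m : ℕ) :
    iteratedDeriv m f x = iteratedDeriv m g x := by
  induction m generalizing f g with
  | zero => simpa using h.eq_of_nhds
  | succ m ih => rw [iteratedDeriv_succ', iteratedDeriv_succ']; exact ih h.deriv

lemma aux_deriv_analyticAt {f : ℝ → ℝ} {x : ℝ} (hf : AnalyticAt ℝ f x) :
    AnalyticAt ℝ (deriv f) x := by
  obtain ⟨t, ht, hto, hxt⟩ := eventually_nhds_iff.mp hf.eventually_analyticAt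
  exact (AnalyticOnNhd.deriv (fun y hy => ht y hy)) x hxt

lemma aux_iD_add : ∀ (m : ℕ) {f g : ℝ → ℝ} {x : ℝ}, AnalyticAt ℝ f x → AnalyticAt ℝ g x →
    iteratedDeriv m (fun y => f y + g y) x = iteratedDeriv m f x + iteratedDeriv m g x := by
  intro m
  induction m with
  | zero => intro f g x _ _; simp
  | succ m ih =>
    intro f g x hf hg
    have hev : deriv (fun y => f y + g y) =ᶠ[nhds x] fun y => deriv f y + deriv g y := by
      filter_upwards [hf.eventually_analyticAt, hg.eventually_analyticAt] with y hy1 hy2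
      exact deriv_add hy1.differentiableAt hy2.differentiableAt
    rw [iteratedDeriv_succ', iteratedDeriv_succ', iteratedDeriv_succ', aux_iD_congr hev]
    exact ih (aux_deriv_analyticAt hf) (aux_deriv_analyticAt hg)

lemma aux_iD_const_mul : ∀ (m : ℕ) {f : ℝ → ℝ} {x : ℝ} (c : ℝ), AnalyticAt ℝ f x →
    iteratedDeriv m (fun y => c * f y) x = c * iteratedDeriv m f x := by
  intro m
  induction m with
  | zero => intro f x c _; simp
  | succ m ih =>
    intro f x c hf
    have hev : deriv (fun y => c * f y) =ᶠ[nhds x] fun y => c * deriv f y := by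
      filter_upwards [hf.eventually_analyticAt] with y hy
      exact deriv_const_mul c hy.differentiableAt
    rw [iteratedDeriv_succ', iteratedDeriv_succ', aux_iD_congr hev]
    exact ih c (aux_deriv_analyticAt hf)

lemma aux_pow_mul_vanish : ∀ (m k : ℕ) (g : ℝ → ℝ), AnalyticAt ℝ g 0 → m < k →
    iteratedDeriv m (fun h => h ^ k * g h) 0 = 0 := by
  intro m
  induction m with
  | zero =>
    intro k g _ hk
    rw [iteratedDeriv_zero]
    rw [zero_pow (by omega : k ≠ 0), zero_mul]
  | succ m ih =>
    intro k g hg hmk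
    obtain ⟨k', rfl⟩ : ∃ k', k = k' + 1 := ⟨k - 1, by omega⟩
    rw [iteratedDeriv_succ']
    have hev : deriv (fun h => h ^ (k' + 1) * g h) =ᶠ[nhds (0:ℝ)]
        fun h => h ^ k' * (((k' : ℝ) + 1) * g h + h * deriv g h) := by
      filter_upwards [hg.eventually_analyticAt] with h hh
      rw [deriv_fun_mul (differentiableAt_pow _) hh.differentiableAt, deriv_pow_field]
      push_cast
      ring
    rw [aux_iD_congr hev]
    exact ih k' _ ((analyticAt_const.mul hg).add
      (analyticAt_id.mul (aux_deriv_analyticAt hg))) (by omega)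

lemma aux_id_mul : ∀ (m : ℕ) (g : ℝ → ℝ), AnalyticAt ℝ g 0 →
    iteratedDeriv (m + 1) (fun h => h * g h) 0 = ((m : ℝ) + 1) * iteratedDeriv m g 0 := by
  intro m
  induction m with
  | zero =>
    intro g hg
    rw [iteratedDeriv_one]
    rw [deriv_fun_mul differentiableAt_fun_id hg.differentiableAt]
    simp
  | succ m ih =>
    intro g hg
    rw [iteratedDeriv_succ' (n := m + 1)]
    have hev : deriv (fun h => h * g h) =ᶠ[nhds (0:ℝ)] fun h => g h + h * deriv g h := by
      filter_upwards [hg.eventually_analyticAt] with h hh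
      rw [deriv_fun_mul differentiableAt_fun_id hh.differentiableAt]
      simp [mul_comm]
    rw [aux_iD_congr hev]
    have hmul : AnalyticAt ℝ (fun h : ℝ => h * deriv g h) 0 :=
      analyticAt_id.mul (aux_deriv_analyticAt hg)
    rw [aux_iD_add (m + 1) (f := g) (g := fun h : ℝ => h * deriv g h) hg hmul]
    rw [ih (deriv g) (aux_deriv_analyticAt hg), ← iteratedDeriv_succ']
    push_cast
    ring

lemma aux_vanish_factor : ∀ (n : ℕ) (f : ℝ → ℝ), AnalyticAt ℝ f 0 →
    (∀ m, m < n → iteratedDeriv m f 0 = 0) →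
    ∃ g : ℝ → ℝ, AnalyticAt ℝ g 0 ∧ ∀ h, f h = h ^ n * g h := by
  intro n
  induction n with
  | zero => intro f hf _; exact ⟨f, hf, fun h => by simp⟩
  | succ n ih =>
    intro f hf hvan
    have hf0 : f 0 = 0 := by
      have := hvan 0 (Nat.succ_pos n)
      simpa [iteratedDeriv_zero] using this
    obtain ⟨p, hp⟩ := hf
    set g₁ := dslope f 0 with hg₁def
    have hg₁ : AnalyticAt ℝ g₁ 0 := ⟨p.fslope, hp.has_fpower_series_dslope_fslope⟩
    have hfac : ∀ h, f h = h * g₁ h := by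
      intro h
      have h1 := sub_smul_dslope f 0 h
      rw [sub_zero, smul_eq_mul, hf0, sub_zero] at h1
      exact h1.symm
    have hder : ∀ m, m < n → iteratedDeriv m g₁ 0 = 0 := by
      intro m hm
      have h2 := aux_id_mul m g₁ hg₁
      have h3 : (fun h => h * g₁ h) = f := funext fun h => (hfac h).symm
      rw [h3, hvan (m + 1) (by omega)] at h2
      rcases mul_eq_zero.mp h2.symm with h | h
      · exfalso
        have : ((m : ℝ) + 1) ≠ 0 := by positivity
        exact this h
      · exact h
    obtain ⟨g, hg, hgf⟩ := ih g₁ hg₁ hder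
    refine ⟨g, hg, fun h => ?_⟩
    rw [hfac h, hgf h]
    ring

lemma aux_iD_affine : ∀ (m : ℕ) (F : ℝ → ℝ) (x₀ d : ℝ), AnalyticAt ℝ F x₀ →
    iteratedDeriv m (fun h => F (x₀ + d * h)) 0 = d ^ m * iteratedDeriv m F x₀ := by
  intro m
  induction m with
  | zero => intro F x₀ d _; simp
  | succ m ih =>
    intro F x₀ d hF
    have haff : AnalyticAt ℝ (fun h : ℝ => x₀ + d * h) 0 :=
      analyticAt_const.add (analyticAt_const.mul analyticAt_id)
    have htend : Filter.Tendsto (fun h : ℝ => x₀ + d * h) (nhds 0) (nhds x₀) := by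
      have hc : Continuous fun h : ℝ => x₀ + d * h := by continuity
      exact hc.tendsto' 0 x₀ (by simp)
    have hev : deriv (fun h => F (x₀ + d * h)) =ᶠ[nhds (0:ℝ)]
        fun h => d * deriv F (x₀ + d * h) := by
      filter_upwards [htend.eventually hF.eventually_analyticAt] with h hh
      have h1 : HasDerivAt (fun t : ℝ => x₀ + d * t) d h := by
        simpa using ((hasDerivAt_id h).const_mul d).const_add x₀
      have h2 : HasDerivAt F (deriv F (x₀ + d * h)) (x₀ + d * h) :=
        hh.differentiableAt.hasDerivAt
      simpa [Function.comp_def, mul_comm] using (h2.comp h h1).deriv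
    rw [iteratedDeriv_succ', aux_iD_congr hev]
    have hda : AnalyticAt ℝ (fun h : ℝ => deriv F (x₀ + d * h)) 0 := by
      have h1 : AnalyticAt ℝ (deriv F) ((fun h : ℝ => x₀ + d * h) 0) := by
        simpa using aux_deriv_analyticAt hF
      exact AnalyticAt.comp (g := deriv F) (f := fun h : ℝ => x₀ + d * h) h1 haff
    rw [aux_iD_const_mul m d hda]
    have := ih (deriv F) x₀ d (aux_deriv_analyticAt hF)
    rw [this, ← iteratedDeriv_succ']
    ring

lemma aux_iD_polyeval : ∀ (m : ℕ) (P : ℝ[X]) (x : ℝ),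
    iteratedDeriv m (fun h => Polynomial.eval h P) x
      = Polynomial.eval x (Polynomial.derivative^[m] P) := by
  intro m
  induction m with
  | zero => intro P x; simp
  | succ m ih =>
    intro P x
    rw [iteratedDeriv_succ']
    have hd : _root_.deriv (fun h => Polynomial.eval h P)
        = fun h => Polynomial.eval h P.derivative :=
      funext fun h => Polynomial.deriv (p := P)
    rw [hd, ih, Function.iterate_succ_apply]

lemma aux_iD_poly_coeff (m : ℕ) (P : ℝ[X]) :
    iteratedDeriv m (fun h => Polynomial.eval h P) 0 = (m.factorial : ℝ) * P.coeff m := by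
  rw [aux_iD_polyeval, ← Polynomial.coeff_zero_eq_eval_zero, Polynomial.coeff_iterate_derivative]
  simp [Nat.descFactorial_self, nsmul_eq_mul]

lemma aux_polyeval_analytic (P : ℝ[X]) (x : ℝ) :
    AnalyticAt ℝ (fun h => Polynomial.eval h P) x := by
  have hrw : (fun h : ℝ => Polynomial.eval h P)
      = fun h => ∑ k ∈ Finset.range (P.natDegree + 1), P.coeff k * h ^ k :=
    funext fun h => Polynomial.eval_eq_sum_range _
  rw [hrw]
  exact Finset.analyticAt_fun_sum _ fun k _ => analyticAt_const.mul (analyticAt_id.pow _)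

lemma aux_analyticAt_det {r : ℕ} (A : Fin r → Fin r → ℝ → ℝ)
    (hA : ∀ i j, AnalyticAt ℝ (A i j) 0) :
    AnalyticAt ℝ (fun h => (Matrix.of fun i j => A i j h).det) 0 := by
  have hrw : (fun h => (Matrix.of fun i j => A i j h).det)
      = fun h => ∑ σ : Equiv.Perm (Fin r),
          ((Equiv.Perm.sign σ : ℤ) : ℝ) * ∏ i, A (σ i) i h := by
    funext h
    rw [Matrix.det_apply']
    rfl
  rw [hrw]
  exact Finset.analyticAt_fun_sum _ fun σ _ =>
    analyticAt_const.mul (Finset.analyticAt_fun_prod _ fun i _ => hA _ _)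

lemma aux_iD_sub : ∀ (m : ℕ) {f g : ℝ → ℝ} {x : ℝ}, AnalyticAt ℝ f x → AnalyticAt ℝ g x →
    iteratedDeriv m (fun y => f y - g y) x = iteratedDeriv m f x - iteratedDeriv m g x := by
  intro m
  induction m with
  | zero => intro f g x _ _; simp
  | succ m ih =>
    intro f g x hf hg
    have hev : deriv (fun y => f y - g y) =ᶠ[nhds x] fun y => deriv f y - deriv g y := by
      filter_upwards [hf.eventually_analyticAt, hg.eventually_analyticAt] with y hy1 hy2
      exact deriv_sub hy1.differentiableAt hy2.differentiableAt
    rw [iteratedDeriv_succ', iteratedDeriv_succ', iteratedDeriv_succ', aux_iD_congr hev]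
    exact ih (aux_deriv_analyticAt hf) (aux_deriv_analyticAt hg)

lemma aux_coeff_sum (n : ℕ) (a : ℕ → ℝ) (m : ℕ) (hm : m < n) :
    (∑ k ∈ Finset.range n, C (a k) * X ^ k).coeff m = a m := by
  rw [Polynomial.finset_sum_coeff]
  have : ∀ k ∈ Finset.range n, (C (a k) * X ^ k).coeff m = if m = k then a k else 0 := by
    intro k _
    rw [Polynomial.coeff_C_mul, Polynomial.coeff_X_pow]
    split <;> simp
  rw [Finset.sum_congr rfl this, Finset.sum_ite_eq (Finset.range n) m a,
    if_pos (Finset.mem_range.mpr hm)]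

theorem toeplitz_det_vanishing_order (r : ℕ) (hr : 2 ≤ r) (u₀ : ℝ) (K : ℝ → ℝ)
    (s : Set ℝ) (hs : IsOpen s) (hK : AnalyticOnNhd ℝ K s)
    (ε : ℝ) (hε : 0 < ε)
    (hmem : ∀ h : ℝ, |h| < ε → ∀ i j : Fin r, u₀ + ((i : ℝ) - (j : ℝ)) * h ∈ s) :
    ∀ m : ℕ, m < r * (r - 1) →
      iteratedDeriv m
        (fun h : ℝ => (Matrix.of fun i j : Fin r => K (u₀ + ((i : ℝ) - (j : ℝ)) * h)).det)
        0 = 0 := by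
  classical
  intro m hm
  set n := r * (r - 1) with hn
  have hσ : n = 2 * ∑ i ∈ Finset.range r, i := by
    have := Finset.sum_range_id_mul_two r
    omega
  have hu₀ : u₀ ∈ s := by
    have := hmem 0 (by simpa using hε) ⟨0, by omega⟩ ⟨0, by omega⟩
    simpa using this
  have hKa : AnalyticAt ℝ K u₀ := hK u₀ hu₀
  set c : ℕ → ℝ := fun k => iteratedDeriv k K u₀ / (k.factorial : ℝ) with hc
  set P : Fin r → Fin r → ℝ[X] := fun i j =>
    ∑ k ∈ Finset.range n, C (c k * ((i : ℝ) - (j : ℝ)) ^ k) * X ^ k with hP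
  -- analyticity of the entries
  have hentry_an : ∀ i j : Fin r, AnalyticAt ℝ (fun h => K (u₀ + ((i : ℝ) - (j : ℝ)) * h)) 0 := by
    intro i j
    have haff : AnalyticAt ℝ (fun h : ℝ => u₀ + ((i : ℝ) - (j : ℝ)) * h) 0 :=
      analyticAt_const.add (analyticAt_const.mul analyticAt_id)
    have h1 : AnalyticAt ℝ K ((fun h : ℝ => u₀ + ((i : ℝ) - (j : ℝ)) * h) 0) := by
      simpa using hKa
    exact AnalyticAt.comp (g := K) (f := fun h : ℝ => u₀ + ((i : ℝ) - (j : ℝ)) * h) h1 haff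
  -- factor the remainder of each entry
  have hphi : ∀ i j : Fin r, ∃ g : ℝ → ℝ, AnalyticAt ℝ g 0 ∧
      ∀ h, K (u₀ + ((i : ℝ) - (j : ℝ)) * h) - Polynomial.eval h (P i j) = h ^ n * g h := by
    intro i j
    apply aux_vanish_factor n
      (fun h => K (u₀ + ((i : ℝ) - (j : ℝ)) * h) - Polynomial.eval h (P i j))
      ((hentry_an i j).sub (aux_polyeval_analytic _ 0))
    intro m' hm'
    rw [aux_iD_sub m' (hentry_an i j) (aux_polyeval_analytic _ 0)]
    rw [aux_iD_affine m' K u₀ ((i : ℝ) - (j : ℝ)) hKa]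
    rw [aux_iD_poly_coeff m' (P i j)]
    rw [hP]
    rw [aux_coeff_sum n _ m' hm']
    rw [hc]
    have hfac : (m'.factorial : ℝ) ≠ 0 := Nat.cast_ne_zero.mpr (Nat.factorial_ne_zero m')
    field_simp
    ring
  choose g hg hgf using hphi
  -- divisibility of the polynomial part
  have hdvd : (X : ℝ[X]) ^ n ∣ (Matrix.of fun i j : Fin r => P i j).det := by
    rw [hσ]
    have h1 := aux_alg r n c (fun i : Fin r => (i : ℝ)) (fun j : Fin r => -(j : ℝ))
    have h2 : (Matrix.of fun i j : Fin r =>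
        ∑ k ∈ Finset.range n, C (c k * ((i : ℝ) + -(j : ℝ)) ^ k) * X ^ k)
        = Matrix.of fun i j : Fin r => P i j := by
      funext i j
      rw [hP]
      simp [sub_eq_add_neg]
    rwa [h2] at h1
  obtain ⟨ρ, hρ⟩ := hdvd
  -- the analytic cofactor
  set Gtot : ℝ → ℝ := fun h =>
    Polynomial.eval h ρ + ∑ t ∈ (Finset.univ : Finset (Finset (Fin r))).erase ∅,
      h ^ (n * (t.card - 1)) *
        (Matrix.of fun i j => if i ∈ t then g i j h else Polynomial.eval h (P i j)).det
    with hGtot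
  have hGan : AnalyticAt ℝ Gtot 0 := by
    apply AnalyticAt.add
    · exact aux_polyeval_analytic ρ 0
    · apply Finset.analyticAt_fun_sum
      intro t _
      apply AnalyticAt.mul
      · exact analyticAt_id.pow _
      · apply aux_analyticAt_det
        intro i j
        by_cases hit : i ∈ t
        · simpa [hit] using hg i j
        · simpa [hit] using aux_polyeval_analytic (P i j) 0
  -- the key global identity
  have hkey : ∀ h : ℝ, (Matrix.of fun i j : Fin r => K (u₀ + ((i : ℝ) - (j : ℝ)) * h)).det
      = h ^ n * Gtot h := by
    intro h
    set f := (Matrix.detRowAlternating : (Fin r → ℝ) [⋀^Fin r]→ₗ[ℝ] ℝ) with hfd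
    set Arows : Fin r → (Fin r → ℝ) := fun i j => Polynomial.eval h (P i j) with hA
    set Brows : Fin r → (Fin r → ℝ) := fun i j => h ^ n * g i j h with hB
    have hE : (Matrix.of fun i j : Fin r => K (u₀ + ((i : ℝ) - (j : ℝ)) * h))
        = Matrix.of (Brows + Arows) := by
      funext i j
      have h1 := hgf i j h
      simp only [Matrix.of_apply, Pi.add_apply, hA, hB]
      linarith
    rw [hE]
    have hdet1 : (Matrix.of (Brows + Arows)).det = f (Brows + Arows) := rfl
    have hadd : f (Brows + Arows) = ∑ t : Finset (Fin r), f (t.piecewise Brows Arows) :=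
      f.toMultilinearMap.map_add_univ Brows Arows
    rw [hdet1, hadd]
    -- evaluate each term of the expansion
    have hterm : ∀ t : Finset (Fin r), f (t.piecewise Brows Arows)
        = (h ^ n) ^ t.card *
          (Matrix.of fun i j => if i ∈ t then g i j h else Polynomial.eval h (P i j)).det := by
      intro t
      have hpw : t.piecewise Brows Arows = fun i j => (if i ∈ t then h ^ n else 1) *
          (if i ∈ t then g i j h else Polynomial.eval h (P i j)) := by
        funext i j
        by_cases hit : i ∈ t <;> simp [Finset.piecewise, hit, hA, hB]
      have h2 : f (t.piecewise Brows Arows) = (Matrix.of fun i j =>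
          (if i ∈ t then h ^ n else 1) *
          (Matrix.of fun i j => if i ∈ t then g i j h else Polynomial.eval h (P i j)) i j).det := by
        rw [show f (t.piecewise Brows Arows) = (Matrix.of (t.piecewise Brows Arows)).det from rfl,
          hpw]
        rfl
      rw [h2, Matrix.det_mul_column]
      congr 1
      rw [Finset.prod_ite_mem Finset.univ t (fun _ => h ^ n), Finset.univ_inter,
        Finset.prod_const]
    -- split off the empty set
    rw [Finset.sum_congr rfl (fun t _ => hterm t)]
    rw [← Finset.add_sum_erase _ _ (Finset.mem_univ (∅ : Finset (Fin r)))]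
    -- empty-set term = h^n * eval h ρ
    have hempty : ((h ^ n) ^ (∅ : Finset (Fin r)).card *
        (Matrix.of fun i j => if i ∈ (∅ : Finset (Fin r)) then g i j h
          else Polynomial.eval h (P i j)).det) = h ^ n * Polynomial.eval h ρ := by
      simp only [Finset.card_empty, pow_zero, one_mul, Finset.notMem_empty, if_false]
      have hmap : (Matrix.of fun i j : Fin r => Polynomial.eval h (P i j))
          = (Matrix.of fun i j : Fin r => P i j).map (Polynomial.evalRingHom h) := by
        funext i j
        simp [Matrix.map_apply]
      rw [hmap]
      have h5 : ((Matrix.of fun i j : Fin r => P i j).map (Polynomial.evalRingHom h)).det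
          = Polynomial.eval h ((Matrix.of fun i j : Fin r => P i j).det) :=
        ((Polynomial.evalRingHom h).map_det _).symm
      rw [h5, hρ]
      simp
    rw [hempty]
    -- the other terms
    have hother : ∀ t ∈ (Finset.univ : Finset (Finset (Fin r))).erase ∅,
        (h ^ n) ^ t.card *
          (Matrix.of fun i j => if i ∈ t then g i j h else Polynomial.eval h (P i j)).det
        = h ^ n * (h ^ (n * (t.card - 1)) *
          (Matrix.of fun i j => if i ∈ t then g i j h else Polynomial.eval h (P i j)).det) := by
      intro t ht
      have hne : t ≠ ∅ := (Finset.mem_erase.mp ht).1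
      have hcard : 1 ≤ t.card := Finset.card_pos.mpr (Finset.nonempty_of_ne_empty hne)
      have hexp : n * t.card = n + n * (t.card - 1) := by
        obtain ⟨k, hk⟩ := Nat.exists_eq_add_of_le hcard
        rw [hk]
        simp [Nat.mul_add]
      rw [← pow_mul, hexp, pow_add]
      ring
    rw [Finset.sum_congr rfl hother, ← Finset.mul_sum, ← mul_add]
  have hfun : (fun h : ℝ => (Matrix.of fun i j : Fin r => K (u₀ + ((i : ℝ) - (j : ℝ)) * h)).det)
      = fun h => h ^ n * Gtot h := funext hkey
  rw [hfun]
  exact aux_pow_mul_vanish m n Gtot hGan hm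
end
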